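/- Let θ ∈ (0,2π)\{π}, b ∈ ℝ⁴ with N := N₂(θ,b) ∈ Sp(4), and define N_α = N · diag(R(α),R(α)). Then the Sp(4)-discriminant satisfies Δ(N_α) = 8(b₂−b₃) sinθ cosα sinα + [16 sin²θ + (b₁−b₄)² + 4b₂b₃] sin²α. Consequently, if (b₂−b₃)sinθ < 0 (the non-trivial case), there exists α₀ > 0 such that Δ(N_α) < 0 for α ∈ (0,α₀) and Δ(N_α) > 0 for α ∈ (−α₀,0); if (b₂−b₃)sinθ > 0 the signs are reversed. -/

import Mathlib

open Matrix Set Polynomial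

noncomputable section

def J4 : Matrix (Fin 4) (Fin 4) ℝ :=
  !![0, -1, 0, 0; 1, 0, 0, 0; 0, 0, 0, -1; 0, 0, 1, 0]

/-- The normal form `N₂(θ, b)`. -/
def N2 (θ b₁ b₂ b₃ b₄ : ℝ) : Matrix (Fin 4) (Fin 4) ℝ :=
  !![Real.cos θ, b₁, -Real.sin θ, b₂;
     0, Real.cos θ, 0, -Real.sin θ;
     Real.sin θ, b₃, Real.cos θ, b₄;
     0, Real.sin θ, 0, Real.cos θ]

/-- The block rotation `diag(R(α), R(α)) ∈ Sp(4)`. -/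
def Rd (α : ℝ) : Matrix (Fin 4) (Fin 4) ℝ :=
  !![Real.cos α, -Real.sin α, 0, 0;
     Real.sin α, Real.cos α, 0, 0;
     0, 0, Real.cos α, -Real.sin α;
     0, 0, Real.sin α, Real.cos α]

/-- `σ₂(M)`: the second elementary symmetric function of the eigenvalues of a 4×4
matrix, i.e. the degree-2 coefficient of its characteristic polynomial. -/
def sigma2 (M : Matrix (Fin 4) (Fin 4) ℝ) : ℝ := M.charpoly.coeff 2

/-- The discriminant `Δ(M) = σ₁(M)² − 4σ₂(M) + 8` for `M ∈ Sp(4)`. -/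
def Delta4 (M : Matrix (Fin 4) (Fin 4) ℝ) : ℝ :=
  (Matrix.trace M)^2 - 4 * sigma2 M + 8

set_option maxHeartbeats 1600000


lemma charmatrix_fin_four (M : Matrix (Fin 4) (Fin 4) ℝ) :
    charmatrix M = !![X - C (M 0 0), -C (M 0 1), -C (M 0 2), -C (M 0 3);
      -C (M 1 0), X - C (M 1 1), -C (M 1 2), -C (M 1 3);
      -C (M 2 0), -C (M 2 1), X - C (M 2 2), -C (M 2 3);
      -C (M 3 0), -C (M 3 1), -C (M 3 2), X - C (M 3 3)] := by
  ext i j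
  fin_cases i <;> fin_cases j <;>
    simp [charmatrix_apply, Matrix.diagonal_apply]

lemma det_expl (M : Matrix (Fin 4) (Fin 4) ℝ) :
    (charmatrix M).det = (X - C (M 0 0)) * ((X - C (M 1 1)) * ((X - C (M 2 2)) * (X - C (M 3 3)) - (-C (M 2 3)) * (-C (M 3 2)))
        - (-C (M 1 2)) * ((-C (M 2 1)) * (X - C (M 3 3)) - (-C (M 2 3)) * (-C (M 3 1)))
        + (-C (M 1 3)) * ((-C (M 2 1)) * (-C (M 3 2)) - (X - C (M 2 2)) * (-C (M 3 1))))
      - (-C (M 0 1)) * ((-C (M 1 0)) * ((X - C (M 2 2)) * (X - C (M 3 3)) - (-C (M 2 3)) * (-C (M 3 2)))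
        - (-C (M 1 2)) * ((-C (M 2 0)) * (X - C (M 3 3)) - (-C (M 2 3)) * (-C (M 3 0)))
        + (-C (M 1 3)) * ((-C (M 2 0)) * (-C (M 3 2)) - (X - C (M 2 2)) * (-C (M 3 0))))
      + (-C (M 0 2)) * ((-C (M 1 0)) * ((-C (M 2 1)) * (X - C (M 3 3)) - (-C (M 2 3)) * (-C (M 3 1)))
        - (X - C (M 1 1)) * ((-C (M 2 0)) * (X - C (M 3 3)) - (-C (M 2 3)) * (-C (M 3 0)))
        + (-C (M 1 3)) * ((-C (M 2 0)) * (-C (M 3 1)) - (-C (M 2 1)) * (-C (M 3 0))))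
      - (-C (M 0 3)) * ((-C (M 1 0)) * ((-C (M 2 1)) * (-C (M 3 2)) - (X - C (M 2 2)) * (-C (M 3 1)))
        - (X - C (M 1 1)) * ((-C (M 2 0)) * (-C (M 3 2)) - (X - C (M 2 2)) * (-C (M 3 0)))
        + (-C (M 1 2)) * ((-C (M 2 0)) * (-C (M 3 1)) - (-C (M 2 1)) * (-C (M 3 0)))) := by
  rw [charmatrix_fin_four]
  simp [Matrix.det_succ_row_zero, Fin.sum_univ_succ, Matrix.det_fin_three,
    Fin.succAbove, Fin.castSucc, Fin.castAdd, Fin.castLE,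
    Matrix.cons_val_zero, Matrix.cons_val_one, Matrix.head_cons, Matrix.cons_val_succ]
  ring

lemma charpoly_coeff_two (M : Matrix (Fin 4) (Fin 4) ℝ) :
    M.charpoly.coeff 2 = -(M 2 3*M 3 2) + M 2 2*M 3 3 - M 1 3*M 3 1 - M 1 2*M 2 1 + M 1 1*M 3 3
      + M 1 1*M 2 2 - M 0 3*M 3 0 - M 0 2*M 2 0 - M 0 1*M 1 0 + M 0 0*M 3 3 + M 0 0*M 2 2 + M 0 0*M 1 1 := by
  have h : M.charpoly = X^4 - C (M 3 3 + M 2 2 + M 1 1 + M 0 0) * X^3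
      + C (-(M 2 3*M 3 2) + M 2 2*M 3 3 - M 1 3*M 3 1 - M 1 2*M 2 1 + M 1 1*M 3 3 + M 1 1*M 2 2 - M 0 3*M 3 0 - M 0 2*M 2 0 - M 0 1*M 1 0 + M 0 0*M 3 3 + M 0 0*M 2 2 + M 0 0*M 1 1) * X^2
      - C (-(M 1 3*M 2 2*M 3 1) + M 1 3*M 2 1*M 3 2 + M 1 2*M 2 3*M 3 1 - M 1 2*M 2 1*M 3 3 - M 1 1*M 2 3*M 3 2 + M 1 1*M 2 2*M 3 3 - M 0 3*M 2 2*M 3 0 + M 0 3*M 2 0*M 3 2 - M 0 3*M 1 1*M 3 0 + M 0 3*M 1 0*M 3 1 + M 0 2*M 2 3*M 3 0 - M 0 2*M 2 0*M 3 3 - M 0 2*M 1 1*M 2 0 + M 0 2*M 1 0*M 2 1 + M 0 1*M 1 3*M 3 0 + M 0 1*M 1 2*M 2 0 - M 0 1*M 1 0*M 3 3 - M 0 1*M 1 0*M 2 2 - M 0 0*M 2 3*M 3 2 + M 0 0*M 2 2*M 3 3 - M 0 0*M 1 3*M 3 1 - M 0 0*M 1 2*M 2 1 + M 0 0*M 1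 1*M 3 3 + M 0 0*M 1 1*M 2 2) * X
      + C (M 0 3*M 1 2*M 2 1*M 3 0 - M 0 3*M 1 2*M 2 0*M 3 1 - M 0 3*M 1 1*M 2 2*M 3 0 + M 0 3*M 1 1*M 2 0*M 3 2 + M 0 3*M 1 0*M 2 2*M 3 1 - M 0 3*M 1 0*M 2 1*M 3 2 - M 0 2*M 1 3*M 2 1*M 3 0 + M 0 2*M 1 3*M 2 0*M 3 1 + M 0 2*M 1 1*M 2 3*M 3 0 - M 0 2*M 1 1*M 2 0*M 3 3 - M 0 2*M 1 0*M 2 3*M 3 1 + M 0 2*M 1 0*M 2 1*M 3 3 + M 0 1*M 1 3*M 2 2*M 3 0 - M 0 1*M 1 3*M 2 0*M 3 2 - M 0 1*M 1 2*M 2 3*M 3 0 + M 0 1*M 1 2*M 2 0*M 3 3 + M 0 1*M 1 0*M 2 3*M 3 2 - M 0 1*M 1 0*M 2 2*M 3 3 - M 0 0*M 1 3*M 2 2*M 3 1 + M 0 0*M 1 3*M 2 1*M 3 2 + M 0 0*M 1 2*M 2 3*M 3 1 - M 0 0*M 1 2*M 2 1*M 3 3 - M 0 0*M 1 1*M 2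 3*M 3 2 + M 0 0*M 1 1*M 2 2*M 3 3) := by
    rw [Matrix.charpoly, det_expl]
    simp only [Polynomial.C_add, Polynomial.C_sub, Polynomial.C_mul, Polynomial.C_neg]
    ring
  rw [h]
  simp only [coeff_add, coeff_sub, coeff_C_mul, coeff_X_pow, coeff_X, coeff_C]
  norm_num

lemma N2_mul_Rd (θ b₁ b₂ b₃ b₄ α : ℝ) :
    N2 θ b₁ b₂ b₃ b₄ * Rd α =
      !![Real.cos θ * Real.cos α + b₁ * Real.sin α,
         -(Real.cos θ * Real.sin α) + b₁ * Real.cos α,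
         -(Real.sin θ * Real.cos α) + b₂ * Real.sin α,
         Real.sin θ * Real.sin α + b₂ * Real.cos α;
         Real.cos θ * Real.sin α, Real.cos θ * Real.cos α,
         -(Real.sin θ * Real.sin α), -(Real.sin θ * Real.cos α);
         Real.sin θ * Real.cos α + b₃ * Real.sin α,
         -(Real.sin θ * Real.sin α) + b₃ * Real.cos α,
         Real.cos θ * Real.cos α + b₄ * Real.sin α,
         -(Real.cos θ * Real.sin α) + b₄ * Real.cos α;
         Real.sin θ * Real.sin α, Real.sin θ * Real.cos α,
         Real.cos θ * Real.sin α, Real.cos θ * Real.cos α] := by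
  ext i j
  fin_cases i <;> fin_cases j <;>
    simp [N2, Rd, Matrix.mul_apply, Fin.sum_univ_four, Matrix.vecHead, Matrix.vecTail] <;> ring

lemma Delta4_formula (θ b₁ b₂ b₃ b₄ α : ℝ) :
    Delta4 (N2 θ b₁ b₂ b₃ b₄ * Rd α) =
      8 * (b₂ - b₃) * Real.sin θ * Real.cos α * Real.sin α
        + (16 * Real.sin θ ^ 2 + (b₁ - b₄)^2 + 4 * b₂ * b₃) * Real.sin α ^ 2 := by
  rw [Delta4, sigma2, N2_mul_Rd, charpoly_coeff_two]
  have htr : Matrix.trace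
      (!![Real.cos θ * Real.cos α + b₁ * Real.sin α,
         -(Real.cos θ * Real.sin α) + b₁ * Real.cos α,
         -(Real.sin θ * Real.cos α) + b₂ * Real.sin α,
         Real.sin θ * Real.sin α + b₂ * Real.cos α;
         Real.cos θ * Real.sin α, Real.cos θ * Real.cos α,
         -(Real.sin θ * Real.sin α), -(Real.sin θ * Real.cos α);
         Real.sin θ * Real.cos α + b₃ * Real.sin α,
         -(Real.sin θ * Real.sin α) + b₃ * Real.cos α,
         Real.cos θ * Real.cos α + b₄ * Real.sin α,
         -(Real.cos θ * Real.sin α) + b₄ * Real.cos α;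
         Real.sin θ * Real.sin α, Real.sin θ * Real.cos α,
         Real.cos θ * Real.sin α, Real.cos θ * Real.cos α] : Matrix (Fin 4) (Fin 4) ℝ)
      = 4 * (Real.cos θ * Real.cos α) + (b₁ + b₄) * Real.sin α := by
    simp [Matrix.trace, Fin.sum_univ_four]
    ring
  rw [htr]
  have h1 : Real.cos θ ^ 2 + Real.sin θ ^ 2 = 1 := Real.cos_sq_add_sin_sq θ
  have h2 : Real.cos α ^ 2 + Real.sin α ^ 2 = 1 := Real.cos_sq_add_sin_sq α
  simp
  linear_combination (-8*Real.sin α^2 - 8*Real.cos α^2) * h1 + (-8) * h2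



lemma sign_aux (K L : ℝ) (hK : K < 0) :
    ∃ α₀ > (0:ℝ), ∀ α : ℝ,
      (α ∈ Ioo (0:ℝ) α₀ → 8*K*Real.cos α*Real.sin α + L*Real.sin α^2 < 0) ∧
      (α ∈ Ioo (-α₀) (0:ℝ) → 0 < 8*K*Real.cos α*Real.sin α + L*Real.sin α^2) := by
  have hL1 : (0:ℝ) < |L| + 1 := by positivity
  refine ⟨min (Real.pi/4) ((-4*K)/(|L|+1)), lt_min (by positivity) (div_pos (by linarith) hL1), fun α => ?_⟩
  have hmin1 : min (Real.pi/4) ((-4*K)/(|L|+1)) ≤ Real.pi/4 := min_le_left _ _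
  have hmin2 : min (Real.pi/4) ((-4*K)/(|L|+1)) ≤ (-4*K)/(|L|+1) := min_le_right _ _
  have hpi : Real.pi/4 < Real.pi := by
    have := Real.pi_pos; linarith
  constructor
  · rintro ⟨h0, h1⟩
    have hsa : 0 < Real.sin α := Real.sin_pos_of_pos_of_lt_pi h0 (by linarith)
    have hsle : Real.sin α < α := Real.sin_lt h0
    have hca : Real.cos (Real.pi/4) ≤ Real.cos α := by
      apply Real.cos_le_cos_of_nonneg_of_le_pi h0.le (by linarith)
      linarith
    have hc2 : (1:ℝ)/2 ≤ Real.cos α := by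
      rw [Real.cos_pi_div_four] at hca
      nlinarith [Real.sq_sqrt (by norm_num : (0:ℝ) ≤ 2), Real.sqrt_nonneg 2]
    have hLs : (|L|+1) * Real.sin α < -4*K := by
      have : α < (-4*K)/(|L|+1) := lt_of_lt_of_le h1 hmin2
      have h' : (|L|+1) * α < -4*K := by
        rw [lt_div_iff₀ hL1] at this; linarith
      nlinarith
    have p1 : K * (2*Real.cos α - 1) ≤ 0 :=
      mul_nonpos_of_nonpos_of_nonneg hK.le (by linarith)
    have p2 : L * Real.sin α ≤ |L| * Real.sin α :=
      mul_le_mul_of_nonneg_right (le_abs_self L) hsa.le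
    have key : 8*K*Real.cos α + L*Real.sin α < 0 := by nlinarith
    have := mul_neg_of_pos_of_neg hsa key
    nlinarith [this]
  · rintro ⟨h0, h1⟩
    have hsa : Real.sin α < 0 := Real.sin_neg_of_neg_of_neg_pi_lt h1 (by linarith)
    have hsge : -Real.sin α < -α := by
      have := Real.sin_lt (show (0:ℝ) < -α by linarith)
      rw [Real.sin_neg] at this; linarith
    have hca : Real.cos (Real.pi/4) ≤ Real.cos α := by
      rw [← Real.cos_neg α]
      apply Real.cos_le_cos_of_nonneg_of_le_pi (by linarith) (by linarith)
      linarith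
    have hc2 : (1:ℝ)/2 ≤ Real.cos α := by
      rw [Real.cos_pi_div_four] at hca
      nlinarith [Real.sq_sqrt (by norm_num : (0:ℝ) ≤ 2), Real.sqrt_nonneg 2]
    have hLs : (|L|+1) * (-Real.sin α) < -4*K := by
      have : -α < (-4*K)/(|L|+1) := lt_of_lt_of_le (by linarith) hmin2
      have h' : (|L|+1) * (-α) < -4*K := by
        rw [lt_div_iff₀ hL1] at this; linarith
      nlinarith
    have p1 : K * (2*Real.cos α - 1) ≤ 0 :=
      mul_nonpos_of_nonpos_of_nonneg hK.le (by linarith)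
    have p2 : L * Real.sin α ≤ |L| * (-Real.sin α) := by
      have := mul_nonneg (by nlinarith [neg_abs_le L] : (0:ℝ) ≤ |L| + L)
        (by linarith : (0:ℝ) ≤ -Real.sin α)
      nlinarith
    have key : 8*K*Real.cos α + L*Real.sin α < 0 := by nlinarith
    have := mul_pos_of_neg_of_neg hsa key
    nlinarith [this]

/-- The discriminant of `N_α = N₂(θ,b)·diag(R(α),R(α))` equals
`8(b₂−b₃)sinθ cosα sinα + [16sin²θ + (b₁−b₄)² + 4b₂b₃] sin²α`, with the stated sign
behaviour near `α = 0` in the non-trivial and trivial cases. -/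
theorem N2_perturbation_discriminant (θ b₁ b₂ b₃ b₄ : ℝ)
    (hθ : θ ∈ Ioo (0:ℝ) (2 * Real.pi)) (hθπ : θ ≠ Real.pi)
    (hsp : (N2 θ b₁ b₂ b₃ b₄)ᵀ * J4 * N2 θ b₁ b₂ b₃ b₄ = J4) :
    (∀ α : ℝ, Delta4 (N2 θ b₁ b₂ b₃ b₄ * Rd α) =
      8 * (b₂ - b₃) * Real.sin θ * Real.cos α * Real.sin α
        + (16 * Real.sin θ ^ 2 + (b₁ - b₄)^2 + 4 * b₂ * b₃) * Real.sin α ^ 2) ∧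
    ((b₂ - b₃) * Real.sin θ < 0 →
      ∃ α₀ > (0:ℝ), ∀ α : ℝ,
        (α ∈ Ioo (0:ℝ) α₀ → Delta4 (N2 θ b₁ b₂ b₃ b₄ * Rd α) < 0) ∧
        (α ∈ Ioo (-α₀) (0:ℝ) → 0 < Delta4 (N2 θ b₁ b₂ b₃ b₄ * Rd α))) ∧
    ((b₂ - b₃) * Real.sin θ > 0 →
      ∃ α₀ > (0:ℝ), ∀ α : ℝ,
        (α ∈ Ioo (0:ℝ) α₀ → 0 < Delta4 (N2 θ b₁ b₂ b₃ b₄ * Rd α)) ∧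
        (α ∈ Ioo (-α₀) (0:ℝ) → Delta4 (N2 θ b₁ b₂ b₃ b₄ * Rd α) < 0)) := by
  refine ⟨fun α => Delta4_formula θ b₁ b₂ b₃ b₄ α, fun hK => ?_, fun hK => ?_⟩
  · obtain ⟨α₀, hα₀, h⟩ := sign_aux ((b₂ - b₃) * Real.sin θ)
      (16 * Real.sin θ ^ 2 + (b₁ - b₄)^2 + 4 * b₂ * b₃) hK
    refine ⟨α₀, hα₀, fun α => ⟨fun hm => ?_, fun hm => ?_⟩⟩
    · rw [Delta4_formula]
      have := (h α).1 hm
      nlinarith [this]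
    · rw [Delta4_formula]
      have := (h α).2 hm
      nlinarith [this]
  · obtain ⟨α₀, hα₀, h⟩ := sign_aux (-((b₂ - b₃) * Real.sin θ))
      (16 * Real.sin θ ^ 2 + (b₁ - b₄)^2 + 4 * b₂ * b₃) (by linarith)
    refine ⟨α₀, hα₀, fun α => ⟨fun hm => ?_, fun hm => ?_⟩⟩
    · rw [Delta4_formula]
      obtain ⟨h0, h1⟩ := Set.mem_Ioo.1 hm
      have := (h (-α)).2 (Set.mem_Ioo.2 ⟨by linarith, by linarith⟩)
      rw [Real.cos_neg, Real.sin_neg] at this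
      nlinarith [this]
    · rw [Delta4_formula]
      obtain ⟨h0, h1⟩ := Set.mem_Ioo.1 hm
      have := (h (-α)).1 (Set.mem_Ioo.2 ⟨by linarith, by linarith⟩)
      rw [Real.cos_neg, Real.sin_neg] at this
      nlinarith [this]
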